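/- Let V be a real vector space, let Φ₁, Φ₀, Φ₋₁, Φ₋₂ ∈ V, let τ > 0, τ' > 0, and set Φ̂ := Φ₁ + γ₃·(Φ₁ − Φ₀) − γ₂·(Φ₀ − Φ₋₁) + γ₁·(Φ₋₁ − Φ₋₂). Then ((1+2τ)/(1+τ))·Φ̂ − (1+τ)·Φ₀ + (τ²/(1+τ))·Φ₋₁ = β₃·(Φ₁ − Φ₀) − β₂·(Φ₀ − Φ₋₁) + β₁·(Φ₋₁ − Φ₋₂); that is, the variable-step BDF2 difference operator applied to the pre-filter value Φ̂ equals the third-order β-form difference operator 𝒜(Φ₁) applied to the filtered values. -/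
import Mathlib


/-- BDF2-TF β-coefficients. -/
noncomputable def beta3 (τ τ' : ℝ) : ℝ :=
  1 + τ / (1 + τ) + τ * τ' / (1 + τ' * (1 + τ))
noncomputable def beta2 (τ τ' : ℝ) : ℝ :=
  τ ^ 2 / (1 + τ) + τ ^ 2 * τ' * (1 + τ' * (2 + τ)) / ((1 + τ') * (1 + τ' * (1 + τ)))
noncomputable def beta1 (τ τ' : ℝ) : ℝ :=
  τ ^ 2 * τ' ^ 3 * (1 + τ) / ((1 + τ') * (1 + τ' * (1 + τ)))

/-- BDF2-TF γ-coefficients. -/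
noncomputable def gamma3 (τ τ' : ℝ) : ℝ :=
  τ * τ' * (1 + τ) / ((1 + 2 * τ) * (1 + τ' * (1 + τ)))
noncomputable def gamma2 (τ τ' : ℝ) : ℝ :=
  τ ^ 2 * τ' * (1 + τ) * (1 + τ' * (2 + τ)) /
    ((1 + 2 * τ) * (1 + τ') * (1 + τ' * (1 + τ)))
noncomputable def gamma1 (τ τ' : ℝ) : ℝ :=
  τ ^ 2 * τ' ^ 3 * (1 + τ) ^ 2 / ((1 + 2 * τ) * (1 + τ') * (1 + τ' * (1 + τ)))

/-- The variable-step BDF2 difference operator applied to the pre-filter value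
`Φ̂` equals the third-order β-form difference operator `𝒜(Φ₁)` applied to the
filtered values. -/
theorem bdf2tf_bdf2_of_hat_eq_beta_form {V : Type*} [AddCommGroup V] [Module ℝ V]
    (Φ1 Φ0 Φm1 Φm2 : V) (τ τ' : ℝ) (hτ : 0 < τ) (hτ' : 0 < τ')
    (Φhat : V)
    (hΦhat : Φhat = Φ1 + gamma3 τ τ' • (Φ1 - Φ0) - gamma2 τ τ' • (Φ0 - Φm1)
      + gamma1 τ τ' • (Φm1 - Φm2)) :
    ((1 + 2 * τ) / (1 + τ)) • Φhat - (1 + τ) • Φ0 + (τ ^ 2 / (1 + τ)) • Φm1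
    = beta3 τ τ' • (Φ1 - Φ0) - beta2 τ τ' • (Φ0 - Φm1)
        + beta1 τ τ' • (Φm1 - Φm2) := by
  subst hΦhat
  have h1 : (1 + τ) ≠ 0 := by positivity
  have h2 : (1 + 2 * τ) ≠ 0 := by positivity
  have h3 : (1 + τ') ≠ 0 := by positivity
  have h4 : (1 + τ' * (1 + τ)) ≠ 0 := by positivity
  simp only [beta3, beta2, beta1, gamma3, gamma2, gamma1]
  match_scalars <;> field_simp <;> ring
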